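/- For every real number a > 0, the iterated integral 4·∫_1^∞ (1/s)·( ∫_0^1 exp(−a·s·r²/(1−r²))·r/(1−r²)² dr ) ds equals 2/a. -/

import Mathlib

open MeasureTheory Real

lemma exp_neg_mul_Ioi (c : ℝ) (hc : 0 < c) :
    ∫ x in Set.Ioi (0:ℝ), Real.exp (-c * x) = 1 / c := by
  have h := integral_exp_neg_mul_rpow (p := 1) one_pos hc
  simp only [Real.rpow_one] at h
  rw [h]
  norm_num
  rw [Real.rpow_neg_one]

lemma inner_integral (c : ℝ) (hc : 0 < c) :
    ∫ r in Set.Ioo (0:ℝ) 1, Real.exp (-c * r ^ 2 / (1 - r ^ 2)) * r / (1 - r ^ 2) ^ 2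
      = 1 / (2 * c) := by
  set f : ℝ → ℝ := fun r => r ^ 2 / (1 - r ^ 2) with hf
  have key : ∀ r ∈ Set.Ioo (0:ℝ) 1, (0:ℝ) < 1 - r ^ 2 := by
    rintro r ⟨h0, h1⟩; nlinarith
  have himg : f '' Set.Ioo (0:ℝ) 1 = Set.Ioi 0 := by
    ext y
    constructor
    · rintro ⟨r, hr, rfl⟩
      have h := key r hr
      exact div_pos (pow_pos hr.1 2) h
    · intro hy
      have hy' : (0:ℝ) < y := hy
      have h1y : (0:ℝ) < 1 + y := by linarith
      refine ⟨Real.sqrt (y / (1 + y)), ?_, ?_⟩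
      · constructor
        · exact Real.sqrt_pos.2 (by positivity)
        · exact (Real.sqrt_lt (by positivity) zero_le_one).2
            (by rw [one_pow, div_lt_one h1y]; linarith)
      · simp only [hf]
        rw [Real.sq_sqrt (by positivity)]
        field_simp
        ring
  have hderiv : ∀ r ∈ Set.Ioo (0:ℝ) 1,
      HasDerivWithinAt f (2 * r / (1 - r ^ 2) ^ 2) (Set.Ioo 0 1) r := by
    intro r hr
    have hne : (1 - r ^ 2) ≠ 0 := (key r hr).ne'
    have h1 : HasDerivAt (fun r : ℝ => r ^ 2) (2 * r) r := by
      simpa using hasDerivAt_pow 2 r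
    have h2 : HasDerivAt (fun r : ℝ => 1 - r ^ 2) (-(2 * r)) r := by
      simpa using (hasDerivAt_pow 2 r).const_sub 1
    have := h1.div h2 hne
    refine this.hasDerivWithinAt.congr_deriv ?_
    congr 1
    ring
  have hinj : Set.InjOn f (Set.Ioo 0 1) := by
    apply StrictMonoOn.injOn
    intro r1 h1 r2 h2 hlt
    have k1 := key r1 h1
    have k2 := key r2 h2
    have : r1 ^ 2 < r2 ^ 2 := by nlinarith [h1.1]
    rw [div_lt_div_iff₀ k1 k2]
    nlinarith [h1.1]
  have hchg := integral_image_eq_integral_abs_deriv_smul measurableSet_Ioo hderiv hinj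
      (fun x => Real.exp (-c * x))
  rw [himg, exp_neg_mul_Ioi c hc] at hchg
  have heq : ∫ r in Set.Ioo (0:ℝ) 1, |2 * r / (1 - r ^ 2) ^ 2| • Real.exp (-c * f r)
      = 2 * ∫ r in Set.Ioo (0:ℝ) 1,
        Real.exp (-c * r ^ 2 / (1 - r ^ 2)) * r / (1 - r ^ 2) ^ 2 := by
    rw [← integral_const_mul]
    apply setIntegral_congr_fun measurableSet_Ioo
    intro r hr
    have k := key r hr
    have h2 : (0:ℝ) < (1 - r ^ 2) ^ 2 := by positivity
    have hrpos : (0:ℝ) < r := hr.1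
    dsimp only
    rw [abs_of_nonneg (by positivity : (0:ℝ) ≤ 2 * r / (1 - r ^ 2) ^ 2)]
    simp only [smul_eq_mul, hf]
    rw [mul_div_assoc]
    ring
  rw [heq] at hchg
  field_simp at hchg ⊢
  linarith

theorem Iphi_iterated_pos (a : ℝ) (ha : 0 < a) :
    4 * (∫ s in Set.Ioi (1 : ℝ), (1 / s) *
        ∫ r in Set.Ioo (0 : ℝ) 1, Real.exp (-a * s * r ^ 2 / (1 - r ^ 2)) * r / (1 - r ^ 2) ^ 2)
      = 2 / a := by
  have hcongr : ∫ s in Set.Ioi (1 : ℝ), (1 / s) *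
        ∫ r in Set.Ioo (0 : ℝ) 1, Real.exp (-a * s * r ^ 2 / (1 - r ^ 2)) * r / (1 - r ^ 2) ^ 2
      = ∫ s in Set.Ioi (1:ℝ), (1 / (2 * a)) * s ^ (-2 : ℝ) := by
    apply setIntegral_congr_fun measurableSet_Ioi
    intro s hs
    have hs1 : (1:ℝ) < s := hs
    have hs0 : (0:ℝ) < s := by linarith
    have := inner_integral (a * s) (by positivity)
    simp only [neg_mul] at this ⊢
    rw [this]
    rw [Real.rpow_neg hs0.le, show (2:ℝ) = ((2:ℕ):ℝ) by norm_num, Real.rpow_natCast]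
    field_simp
  rw [hcongr, integral_const_mul, integral_Ioi_rpow_of_lt (by norm_num) one_pos]
  norm_num
  field_simp
  ring
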